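/- Let a, b, c be positive integers and let Γ be the Z-grading of K[x,y,z] with deg x = a, deg y = b, deg z = −c. Let E be the subgroup of Γ-graded automorphisms fixing z, and let T be the subgroup of automorphisms of the form x ↦ x, y ↦ y, z ↦ λz with λ ∈ K nonzero. Then E is a normal subgroup of the group Aut_Γ of Γ-graded automorphisms, E ∩ T = {id}, every Γ-graded automorphism is a composition τ∘φ with τ ∈ T and φ ∈ E, and hence Aut_Γ is the (internal) semidirect product E ⋊ T. -/

import Mathlib

open MvPolynomial

/-- For the `ℤ`-grading of `K[x,y,z]` with weights `w`, an automorphism is *graded*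
if it maps each homogeneous component into itself. -/
def IsGraded {K : Type*} [CommRing K] (w : Fin 3 → ℤ)
    (φ : MvPolynomial (Fin 3) K ≃ₐ[K] MvPolynomial (Fin 3) K) : Prop :=
  ∀ (d : ℤ) (f : MvPolynomial (Fin 3) K),
    f.IsWeightedHomogeneous w d → (φ f).IsWeightedHomogeneous w d

/-- `E` is the set of graded automorphisms fixing `z = X 2`. -/
def MemE {K : Type*} [CommRing K] (w : Fin 3 → ℤ)
    (φ : MvPolynomial (Fin 3) K ≃ₐ[K] MvPolynomial (Fin 3) K) : Prop :=
  IsGraded w φ ∧ φ (X 2) = X 2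

/-- `T` is the set of automorphisms `x ↦ x`, `y ↦ y`, `z ↦ λ z` with `λ ≠ 0`. -/
def MemT {K : Type*} [CommRing K]
    (φ : MvPolynomial (Fin 3) K ≃ₐ[K] MvPolynomial (Fin 3) K) : Prop :=
  ∃ l : K, l ≠ 0 ∧ φ (X 0) = X 0 ∧ φ (X 1) = X 1 ∧ φ (X 2) = C l * X 2

/-! ### Auxiliary lemmas -/

/-- Units of a multivariate polynomial ring over a domain are constants. -/
lemma mv_isUnit_eq_C {R : Type*} [CommRing R] [IsDomain R] :
    ∀ {n : ℕ} (p : MvPolynomial (Fin n) R), IsUnit p → ∃ r : R, p = C r := by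
  intro n
  induction n with
  | zero => intro p _; exact ⟨_, eq_C_of_isEmpty p⟩
  | succ n ih =>
    intro p hp
    have hq : IsUnit (finSuccEquiv R n p) := hp.map (finSuccEquiv R n)
    obtain ⟨r, hru, hrq⟩ := Polynomial.isUnit_iff.mp hq
    obtain ⟨s, rfl⟩ := ih r hru
    refine ⟨s, (finSuccEquiv R n).injective ?_⟩
    rw [← hrq]
    simp [MvPolynomial.finSuccEquiv_apply]

lemma weight_fin3 (w : Fin 3 → ℤ) (m : Fin 3 →₀ ℕ) :
    Finsupp.weight w m = (m 0 : ℤ) * w 0 + (m 1 : ℤ) * w 1 + (m 2 : ℤ) * w 2 := by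
  rw [Finsupp.weight_apply, Finsupp.sum_fintype]
  · rw [Fin.sum_univ_three]
    simp [nsmul_eq_mul]
  · intro i; rw [zero_smul]

lemma X2_dvd_of_neg {K : Type*} [CommRing K] {a b c : ℕ} (hc : 0 < c)
    {f : MvPolynomial (Fin 3) K}
    (hf : f.IsWeightedHomogeneous ![(a : ℤ), (b : ℤ), -(c : ℤ)] (-(c : ℤ))) :
    (X 2 : MvPolynomial (Fin 3) K) ∣ f := by
  conv_rhs => rw [f.as_sum]
  apply Finset.dvd_sum
  intro m hm
  rw [X_dvd_monomial]
  right
  intro h2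
  have hw := hf (mem_support_iff.mp hm)
  rw [weight_fin3] at hw
  simp only [Matrix.cons_val_zero, Matrix.cons_val_one, Matrix.head_cons,
    Matrix.cons_val_two, Matrix.tail_cons, h2] at hw
  have h0 : (0 : ℤ) ≤ (m 0 : ℤ) * a + (m 1 : ℤ) * b := by positivity
  omega

section Scale

variable {K : Type*} [CommRing K]

/-- The algebra endomorphism scaling each variable `X i` by `u i`. -/
noncomputable def scaleHom (u : Fin 3 → K) :
    MvPolynomial (Fin 3) K →ₐ[K] MvPolynomial (Fin 3) K :=
  aeval (fun i => C (u i) * X i)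

@[simp] lemma scaleHom_X (u : Fin 3 → K) (i : Fin 3) :
    scaleHom u (X i) = C (u i) * X i := by
  simp [scaleHom]

lemma scaleHom_monomial (u : Fin 3 → K) (m : Fin 3 →₀ ℕ) (r : K) :
    scaleHom u (monomial m r) = monomial m (r * ∏ i, u i ^ m i) := by
  rw [scaleHom, aeval_monomial]
  rw [Finsupp.prod_fintype _ _ (fun i => pow_zero _)]
  have h1 : ∀ i : Fin 3, (C (u i) * X i) ^ m i
      = C (u i ^ m i) * (X i : MvPolynomial (Fin 3) K) ^ m i := by
    intro i; rw [mul_pow, C_pow]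
  simp_rw [h1]
  rw [Finset.prod_mul_distrib, ← map_prod]
  have hX : (∏ i : Fin 3, (X i : MvPolynomial (Fin 3) K) ^ m i) = monomial m 1 := by
    rw [monomial_eq, C_1, one_mul, Finsupp.prod_fintype _ _ (fun i => pow_zero _)]
  rw [hX]
  rw [algebraMap_eq, mul_comm (C r), C_mul_monomial, mul_one, mul_comm, C_mul_monomial,
    mul_comm r]

lemma scaleHom_isWeightedHomogeneous (u : Fin 3 → K) {w : Fin 3 → ℤ}
    {f : MvPolynomial (Fin 3) K} {d : ℤ} (hf : f.IsWeightedHomogeneous w d) :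
    (scaleHom u f).IsWeightedHomogeneous w d := by
  rw [← mem_weightedHomogeneousSubmodule]
  conv => rw [f.as_sum]
  rw [map_sum]
  apply Submodule.sum_mem
  intro m hm
  rw [scaleHom_monomial, mem_weightedHomogeneousSubmodule]
  exact isWeightedHomogeneous_monomial _ _ _ (hf (mem_support_iff.mp hm))

end Scale

section ScaleEquiv

variable {K : Type*} [Field K]

/-- The algebra automorphism scaling each variable `X i` by a nonzero `u i`. -/
noncomputable def scaleEquiv (u : Fin 3 → K) (hu : ∀ i, u i ≠ 0) :
    MvPolynomial (Fin 3) K ≃ₐ[K] MvPolynomial (Fin 3) K :=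
  AlgEquiv.ofAlgHom (scaleHom u) (scaleHom fun i => (u i)⁻¹)
    (by
      apply algHom_ext
      intro i
      simp only [AlgHom.comp_apply, scaleHom_X, map_mul, AlgHom.id_apply]
      rw [← algebraMap_eq, AlgHom.commutes, algebraMap_eq, ← mul_assoc, ← map_mul,
        inv_mul_cancel₀ (hu i), C_1, one_mul])
    (by
      apply algHom_ext
      intro i
      simp only [AlgHom.comp_apply, scaleHom_X, map_mul, AlgHom.id_apply]
      rw [← algebraMap_eq, AlgHom.commutes, algebraMap_eq, ← mul_assoc, ← map_mul,
        mul_inv_cancel₀ (hu i), C_1, one_mul])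

@[simp] lemma scaleEquiv_apply (u : Fin 3 → K) (hu : ∀ i, u i ≠ 0)
    (f : MvPolynomial (Fin 3) K) : scaleEquiv u hu f = scaleHom u f := rfl

@[simp] lemma scaleEquiv_symm_apply (u : Fin 3 → K) (hu : ∀ i, u i ≠ 0)
    (f : MvPolynomial (Fin 3) K) :
    (scaleEquiv u hu).symm f = scaleHom (fun i => (u i)⁻¹) f := rfl

end ScaleEquiv

section Graded

variable {K : Type*} [CommRing K] {w : Fin 3 → ℤ}
variable {φ : MvPolynomial (Fin 3) K ≃ₐ[K] MvPolynomial (Fin 3) K}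

lemma IsGraded.symm (hφ : IsGraded w φ) : IsGraded w φ.symm := by
  classical
  intro d f hf
  set g := φ.symm f with hgdef
  have key : ∀ e : ℤ, e ≠ d → weightedHomogeneousComponent w e g = 0 := by
    intro e he
    have hfin := weightedHomogeneousComponent_finsupp (w := w) g
    have hgsum : g = ∑ m ∈ hfin.toFinset, weightedHomogeneousComponent w m g := by
      rw [← finsum_eq_sum _ hfin, sum_weightedHomogeneousComponent]
    have hf2 : f = ∑ m ∈ hfin.toFinset, φ (weightedHomogeneousComponent w m g) := by
      conv_lhs => rw [← φ.apply_symm_apply f, ← hgdef, hgsum]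
      rw [map_sum]
    have h1 : weightedHomogeneousComponent w e f =
        ∑ m ∈ hfin.toFinset,
          weightedHomogeneousComponent w e (φ (weightedHomogeneousComponent w m g)) := by
      rw [← map_sum, ← hf2]
    have h2 : ∀ m ∈ hfin.toFinset,
        weightedHomogeneousComponent w e (φ (weightedHomogeneousComponent w m g)) =
        if e = m then φ (weightedHomogeneousComponent w m g) else 0 := by
      intro m _
      exact weightedHomogeneousComponent_of_mem
        ((mem_weightedHomogeneousSubmodule _ _ _ _).2
          (hφ m _ (weightedHomogeneousComponent_isWeightedHomogeneous m g)))
    rw [Finset.sum_congr rfl h2, Finset.sum_ite_eq] at h1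
    have h3 : weightedHomogeneousComponent w e f = 0 :=
      hf.weightedHomogeneousComponent_ne e he
    rw [h3] at h1
    by_cases hmem : e ∈ hfin.toFinset
    · rw [if_pos hmem] at h1
      exact φ.injective (by rw [← h1, map_zero])
    · by_contra hne; exact hmem (hfin.mem_toFinset.mpr hne)
  intro m hm
  by_contra hne
  have h0 : weightedHomogeneousComponent w (Finsupp.weight w m) g = 0 := key _ hne
  have := coeff_weightedHomogeneousComponent (w := w) (Finsupp.weight w m) g m
  rw [if_pos rfl, h0, coeff_zero] at this
  exact hm this.symm

end Graded

lemma algEquiv_C {K : Type*} [CommRing K]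
    (θ : MvPolynomial (Fin 3) K ≃ₐ[K] MvPolynomial (Fin 3) K) (r : K) :
    θ (C r) = C r := by
  rw [← algebraMap_eq]
  exact θ.commutes r

/-- Any graded automorphism sends `z` to a nonzero scalar multiple of `z`. -/
lemma exists_scale_factor {K : Type*} [Field K] {a b c : ℕ} (hc : 0 < c)
    {φ : MvPolynomial (Fin 3) K ≃ₐ[K] MvPolynomial (Fin 3) K}
    (hφ : IsGraded ![(a : ℤ), (b : ℤ), -(c : ℤ)] φ) :
    ∃ l : K, l ≠ 0 ∧ φ (X 2) = C l * X 2 := by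
  have hX : (X 2 : MvPolynomial (Fin 3) K).IsWeightedHomogeneous
      ![(a : ℤ), (b : ℤ), -(c : ℤ)] (-(c : ℤ)) := by
    have h := isWeightedHomogeneous_X K ![(a : ℤ), (b : ℤ), -(c : ℤ)] 2
    simpa using h
  obtain ⟨h, hh⟩ := X2_dvd_of_neg hc (hφ _ _ hX)
  obtain ⟨g, hg⟩ := X2_dvd_of_neg hc (hφ.symm _ _ hX)
  have hXne : (X 2 : MvPolynomial (Fin 3) K) ≠ 0 := X_ne_zero _
  have hunit : h * φ g = 1 := by
    have h5 : (X 2 : MvPolynomial (Fin 3) K) * (h * φ g) = X 2 * 1 := by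
      rw [mul_one, ← mul_assoc, ← hh, ← map_mul, ← hg, φ.apply_symm_apply]
    exact mul_left_cancel₀ hXne h5
  obtain ⟨l, hl⟩ := mv_isUnit_eq_C h ⟨⟨h, φ g, hunit, by rw [mul_comm]; exact hunit⟩, rfl⟩
  refine ⟨l, ?_, ?_⟩
  · rintro rfl
    rw [hl, map_zero, zero_mul] at hunit
    exact one_ne_zero hunit.symm
  · rw [hh, hl, mul_comm]

/-- Let `Γ` be the `ℤ`-grading of `K[x,y,z]` with `deg x = a`, `deg y = b`,
`deg z = -c`, `a, b, c > 0`. Then, inside the group `Aut_Γ` of graded automorphisms,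
the subgroup `E` of graded automorphisms fixing `z` is normal, `E ∩ T = {1}`, and every
graded automorphism factors as `τ ∘ φ` with `τ ∈ T`, `φ ∈ E`; i.e. `Aut_Γ = E ⋊ T`.
Here `x = X 0`, `y = X 1`, `z = X 2`, and `*` is composition of automorphisms. -/
theorem graded_automorphism_group_is_semidirect_product
    {K : Type*} [Field K] [IsAlgClosed K] [CharZero K]
    (a b c : ℕ) (ha : 0 < a) (hb : 0 < b) (hc : 0 < c) :
    (∀ φ ψ : MvPolynomial (Fin 3) K ≃ₐ[K] MvPolynomial (Fin 3) K,
      IsGraded ![(a : ℤ), (b : ℤ), -(c : ℤ)] φ → MemE ![(a : ℤ), (b : ℤ), -(c : ℤ)] ψ →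
        MemE ![(a : ℤ), (b : ℤ), -(c : ℤ)] (φ * ψ * φ⁻¹)) ∧
    (∀ φ : MvPolynomial (Fin 3) K ≃ₐ[K] MvPolynomial (Fin 3) K,
      MemE ![(a : ℤ), (b : ℤ), -(c : ℤ)] φ → MemT φ → φ = 1) ∧
    (∀ φ : MvPolynomial (Fin 3) K ≃ₐ[K] MvPolynomial (Fin 3) K,
      IsGraded ![(a : ℤ), (b : ℤ), -(c : ℤ)] φ →
        ∃ τ ψ : MvPolynomial (Fin 3) K ≃ₐ[K] MvPolynomial (Fin 3) K,
          MemT τ ∧ MemE ![(a : ℤ), (b : ℤ), -(c : ℤ)] ψ ∧ φ = τ * ψ) := by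
  refine ⟨?_, ?_, ?_⟩
  · -- normality
    rintro φ ψ hφ ⟨hψg, hψz⟩
    constructor
    · intro d f hf
      show ((φ (ψ (φ.symm f))).IsWeightedHomogeneous _ d)
      exact hφ _ _ (hψg _ _ (hφ.symm _ _ hf))
    · obtain ⟨l, hl, hz⟩ := exists_scale_factor hc hφ
      have hsymm : φ.symm (X 2) = C l⁻¹ * X 2 := by
        apply φ.injective
        rw [φ.apply_symm_apply, map_mul, algEquiv_C, hz, ← mul_assoc, ← map_mul,
          inv_mul_cancel₀ hl, C_1, one_mul]
      show φ (ψ (φ.symm (X 2))) = X 2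
      rw [hsymm, map_mul, algEquiv_C, hψz, map_mul, algEquiv_C, hz, ← mul_assoc, ← map_mul,
        inv_mul_cancel₀ hl, C_1, one_mul]
  · -- trivial intersection
    rintro φ ⟨hg, hz⟩ ⟨l, hl, h0, h1, h2⟩
    have hhom : φ.toAlgHom = AlgHom.id K (MvPolynomial (Fin 3) K) := by
      apply algHom_ext
      intro i
      fin_cases i
      · simpa using h0
      · simpa using h1
      · simpa using hz
    apply AlgEquiv.ext
    intro x
    have := AlgHom.ext_iff.mp hhom x
    simpa using this
  · -- decomposition
    intro φ hφ
    obtain ⟨l, hl, hz⟩ := exists_scale_factor hc hφ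
    have hu : ∀ i : Fin 3, (![1, 1, l] : Fin 3 → K) i ≠ 0 := by
      intro i
      fin_cases i <;> simp [hl]
    refine ⟨scaleEquiv ![1, 1, l] hu, (scaleEquiv ![1, 1, l] hu)⁻¹ * φ,
      ⟨l, hl, ?_, ?_, ?_⟩, ⟨?_, ?_⟩, by group⟩
    · simp
    · simp
    · simp
    · intro d f hf
      show ((scaleEquiv ![1, 1, l] hu).symm (φ f)).IsWeightedHomogeneous _ d
      rw [scaleEquiv_symm_apply]
      exact scaleHom_isWeightedHomogeneous _ (hφ _ _ hf)
    · show (scaleEquiv ![1, 1, l] hu).symm (φ (X 2)) = X 2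
      rw [hz, scaleEquiv_symm_apply, map_mul, ← algebraMap_eq, AlgHom.commutes,
        algebraMap_eq, scaleHom_X]
      simp [← mul_assoc, ← map_mul, mul_inv_cancel₀ hl]
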